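/- Let n ≥ 1, let U ⊆ ℝⁿ be open and convex, let f : ℝⁿ → ℝⁿ be continuously differentiable on U with Jacobian J_f, let xₙ ∈ U, and let A : ℝⁿ → ℝⁿ be an invertible linear map (playing the role of M(xₙ)). Assume: (A1) there is ω > 0 such that for every v ∈ U and every t ∈ [0,1], writing z = t·xₙ + (1−t)·v, one has ‖A⁻¹ (J_f(xₙ) − J_f(z)) (xₙ − v)‖ ≤ ω (1−t) ‖xₙ − v‖²; (A2) there is κ ∈ [0,1) with ‖Id − A⁻¹ J_f(xₙ)‖ ≤ κ; (A3) setting αₙ = ‖A⁻¹ f(xₙ)‖, one has ω αₙ ≤ (1−κ)²/2; (A4) the closed ball of radius R = (1−κ)/ω + √((1−κ)²/ω² − 2αₙ/ω) centered at xₙ is contained in U. Then the map g(v) = v − A⁻¹ f(v) maps the closed ball B_R(xₙ) into itself. -/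

import Mathlib

/-- **Theorem 1** (ball invariance of the simplified Newton map).
If the affine covariant Lipschitz condition (A1), the approximation condition (A2),
the smallness condition (A3) and the ball condition (A4) hold at the iterate `xn`,
then `g v = v - A⁻¹ (f v)` maps the closed ball of radius
`R = (1-κ)/ω + √((1-κ)²/ω² - 2αₙ/ω)` around `xn` into itself. -/
theorem simplified_newton_maps_ball_into_itself
    {n : ℕ} (hn : 1 ≤ n)
    (U : Set (EuclideanSpace ℝ (Fin n))) (hUopen : IsOpen U) (hUconv : Convex ℝ U)
    (f : EuclideanSpace ℝ (Fin n) → EuclideanSpace ℝ (Fin n))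
    (J : EuclideanSpace ℝ (Fin n) →
      (EuclideanSpace ℝ (Fin n) →L[ℝ] EuclideanSpace ℝ (Fin n)))
    (hf : ∀ x ∈ U, HasFDerivAt f (J x) x)
    (hJcont : ContinuousOn J U)
    (xn : EuclideanSpace ℝ (Fin n)) (hxn : xn ∈ U)
    (A : EuclideanSpace ℝ (Fin n) ≃L[ℝ] EuclideanSpace ℝ (Fin n))
    (ω κ : ℝ) (hω : 0 < ω) (hκ0 : 0 ≤ κ) (hκ1 : κ < 1)
    (hA1 : ∀ v ∈ U, ∀ t ∈ Set.Icc (0:ℝ) 1,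
      ‖A.symm ((J xn - J (t • xn + (1 - t) • v)) (xn - v))‖
        ≤ ω * (1 - t) * ‖xn - v‖ ^ 2)
    (hA2 : ‖ContinuousLinearMap.id ℝ (EuclideanSpace ℝ (Fin n))
        - (A.symm : EuclideanSpace ℝ (Fin n) →L[ℝ] EuclideanSpace ℝ (Fin n)).comp (J xn)‖
        ≤ κ)
    (α : ℝ) (hα : α = ‖A.symm (f xn)‖)
    (hA3 : ω * α ≤ (1 - κ) ^ 2 / 2)
    (R : ℝ) (hR : R = (1 - κ) / ω + Real.sqrt ((1 - κ) ^ 2 / ω ^ 2 - 2 * α / ω))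
    (hA4 : Metric.closedBall xn R ⊆ U) :
    Set.MapsTo (fun v => v - A.symm (f v))
      (Metric.closedBall xn R) (Metric.closedBall xn R) := by
  intro v hvball
  have hR0 : (0:ℝ) ≤ R := le_trans dist_nonneg (Metric.mem_closedBall.mp hvball)
  have hvU : v ∈ U := hA4 hvball
  simp only [Metric.mem_closedBall, dist_eq_norm] at hvball ⊢
  set u : EuclideanSpace ℝ (Fin n) := xn - v with hu
  set r : ℝ := ‖u‖ with hrdef
  have hr0 : (0:ℝ) ≤ r := norm_nonneg _
  have hrR : r ≤ R := by rw [hrdef, hu, norm_sub_rev]; exact hvball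
  -- the path
  set p : ℝ → EuclideanSpace ℝ (Fin n) := fun t => t • xn + (1 - t) • v with hp
  have hpU : ∀ t ∈ Set.Icc (0:ℝ) 1, p t ∈ U := by
    intro t ht
    apply hA4
    have hxb : xn ∈ Metric.closedBall xn R := Metric.mem_closedBall_self hR0
    have hvb : v ∈ Metric.closedBall xn R := by
      simpa [Metric.mem_closedBall, dist_eq_norm] using hvball
    exact (convex_closedBall xn R) hxb hvb ht.1 (by linarith [ht.2]) (by ring)
  have hpderiv : ∀ t : ℝ, HasDerivAt p u t := by
    intro t
    have h1 : HasDerivAt (fun t : ℝ => t • xn + (1 - t) • v)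
        ((1:ℝ) • xn + (0 - 1 : ℝ) • v) t :=
      ((hasDerivAt_id t).smul_const xn).add
        (((hasDerivAt_const t (1:ℝ)).sub (hasDerivAt_id t)).smul_const v)
    have h2 : HasDerivAt (fun t : ℝ => t • xn + (1 - t) • v) u t := by
      simpa [hu, sub_eq_add_neg] using h1
    exact h2
  -- the auxiliary function ψ and its derivative
  set ψ : ℝ → EuclideanSpace ℝ (Fin n) := fun t => A.symm (f (p t)) - A.symm (f v) - t • A.symm ((J xn) u) with hψ
  have hψderiv : ∀ t ∈ Set.Icc (0:ℝ) 1,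
      HasDerivAt ψ (A.symm ((J (p t)) u) - A.symm ((J xn) u)) t := by
    intro t ht
    have h1 : HasDerivAt (fun t => f (p t)) ((J (p t)) u) t :=
      (hf (p t) (hpU t ht)).comp_hasDerivAt t (hpderiv t)
    have h2 : HasDerivAt (fun t => A.symm (f (p t))) (A.symm ((J (p t)) u)) t :=
      (A.symm.toContinuousLinearMap.hasFDerivAt).comp_hasDerivAt t h1
    have h3 : HasDerivAt (fun t : ℝ => t • A.symm ((J xn) u)) (A.symm ((J xn) u)) t := by
      simpa using (hasDerivAt_id t).smul_const (A.symm ((J xn) u))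
    have h4 := (h2.sub (hasDerivAt_const t (A.symm (f v)))).sub h3
    rw [sub_zero] at h4
    exact h4
  -- bound on the derivative of ψ
  have hψbound : ∀ t ∈ Set.Icc (0:ℝ) 1,
      ‖A.symm ((J (p t)) u) - A.symm ((J xn) u)‖ ≤ ω * r ^ 2 * (1 - t) := by
    intro t ht
    have h1 := hA1 v hvU t ht
    have h2 : A.symm ((J xn - J (p t)) (xn - v))
        = A.symm ((J xn) u) - A.symm ((J (p t)) u) := by
      rw [ContinuousLinearMap.sub_apply, map_sub, hu]
    calc ‖A.symm ((J (p t)) u) - A.symm ((J xn) u)‖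
        = ‖A.symm ((J xn - J (p t)) (xn - v))‖ := by rw [h2, norm_sub_rev]
      _ ≤ ω * (1 - t) * ‖xn - v‖ ^ 2 := h1
      _ = ω * r ^ 2 * (1 - t) := by rw [hrdef, hu]; ring
  -- the bounding function B
  have hB : ∀ t : ℝ, HasDerivAt (fun t : ℝ => ω * r ^ 2 * (t - t ^ 2 / 2))
      (ω * r ^ 2 * (1 - t)) t := by
    intro t
    have h1 : HasDerivAt (fun t : ℝ => t - t ^ 2 / 2) (1 - t) t := by
      have := (hasDerivAt_id t).sub ((hasDerivAt_pow 2 t).div_const 2)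
      exact this.congr_deriv (by ring)
    simpa using (h1.const_mul (ω * r ^ 2)).congr_deriv (by ring)
  -- mean value inequality
  have hψ1 : ‖ψ 1‖ ≤ ω * r ^ 2 * ((1:ℝ) - 1 ^ 2 / 2) := by
    have hcont : ContinuousOn ψ (Set.Icc 0 1) := fun t ht =>
      ((hψderiv t ht).continuousAt).continuousWithinAt
    have h0 : ‖ψ 0‖ ≤ ω * r ^ 2 * ((0:ℝ) - 0 ^ 2 / 2) := by
      simp [hψ, hp]
    exact image_norm_le_of_norm_deriv_right_le_deriv_boundary hcont
      (fun t ht => ((hψderiv t (Set.mem_Icc_of_Ico ht)).hasDerivWithinAt))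
      h0 hB (fun t ht => hψbound t (Set.mem_Icc_of_Ico ht))
      (Set.right_mem_Icc.mpr zero_le_one)
  have hψ1' : ‖ψ 1‖ ≤ ω * r ^ 2 / 2 := by
    calc ‖ψ 1‖ ≤ ω * r ^ 2 * ((1:ℝ) - 1 ^ 2 / 2) := hψ1
      _ = ω * r ^ 2 / 2 := by ring
  -- identify ψ 1
  have hp1 : p 1 = xn := by simp [hp]
  have hψ1eq : ψ 1 = A.symm (f xn) - A.symm (f v) - A.symm ((J xn) u) := by
    simp [hψ, hp1]
  -- decomposition of the image point
  have hvec : v - A.symm (f v) - xn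
      = ψ 1 - ((ContinuousLinearMap.id ℝ (EuclideanSpace ℝ (Fin n))
          - (A.symm : EuclideanSpace ℝ (Fin n) →L[ℝ] EuclideanSpace ℝ (Fin n)).comp (J xn)) u) - A.symm (f xn) := by
    rw [hψ1eq]
    simp only [ContinuousLinearMap.sub_apply, ContinuousLinearMap.coe_comp',
      ContinuousLinearMap.coe_id', Function.comp_apply, id_eq,
      ContinuousLinearEquiv.coe_coe, hu]
    abel
  -- bound the middle term
  have hmid : ‖(ContinuousLinearMap.id ℝ (EuclideanSpace ℝ (Fin n))
      - (A.symm : EuclideanSpace ℝ (Fin n) →L[ℝ] EuclideanSpace ℝ (Fin n)).comp (J xn)) u‖ ≤ κ * r := by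
    calc ‖(ContinuousLinearMap.id ℝ (EuclideanSpace ℝ (Fin n)) - (A.symm : EuclideanSpace ℝ (Fin n) →L[ℝ] EuclideanSpace ℝ (Fin n)).comp (J xn)) u‖
        ≤ ‖ContinuousLinearMap.id ℝ (EuclideanSpace ℝ (Fin n)) - (A.symm : EuclideanSpace ℝ (Fin n) →L[ℝ] EuclideanSpace ℝ (Fin n)).comp (J xn)‖ * ‖u‖ :=
          ContinuousLinearMap.le_opNorm _ u
      _ ≤ κ * r := mul_le_mul_of_nonneg_right hA2 (norm_nonneg u) |>.trans (le_of_eq rfl)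
  -- the quadratic identity for R
  have hα0 : (0:ℝ) ≤ α := hα ▸ norm_nonneg _
  have hD : (0:ℝ) ≤ (1 - κ) ^ 2 / ω ^ 2 - 2 * α / ω := by
    rw [sub_nonneg, div_le_div_iff₀ hω (by positivity)]
    nlinarith
  set s : ℝ := Real.sqrt ((1 - κ) ^ 2 / ω ^ 2 - 2 * α / ω) with hsdef
  have hs2 : s ^ 2 = (1 - κ) ^ 2 / ω ^ 2 - 2 * α / ω := Real.sq_sqrt hD
  have hs2' : ω ^ 2 * s ^ 2 = (1 - κ) ^ 2 - 2 * α * ω := by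
    rw [hs2]; field_simp
  have hRquad : ω * R ^ 2 / 2 + κ * R + α = R := by
    rw [hR]
    field_simp
    linear_combination hs2'
  -- put everything together
  calc ‖v - A.symm (f v) - xn‖
      = ‖ψ 1 - ((ContinuousLinearMap.id ℝ (EuclideanSpace ℝ (Fin n))
          - (A.symm : EuclideanSpace ℝ (Fin n) →L[ℝ] EuclideanSpace ℝ (Fin n)).comp (J xn)) u) - A.symm (f xn)‖ := by rw [hvec]
    _ ≤ ‖ψ 1 - ((ContinuousLinearMap.id ℝ (EuclideanSpace ℝ (Fin n))
          - (A.symm : EuclideanSpace ℝ (Fin n) →L[ℝ] EuclideanSpace ℝ (Fin n)).comp (J xn)) u)‖ + ‖A.symm (f xn)‖ := norm_sub_le _ _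
    _ ≤ ‖ψ 1‖ + ‖(ContinuousLinearMap.id ℝ (EuclideanSpace ℝ (Fin n))
          - (A.symm : EuclideanSpace ℝ (Fin n) →L[ℝ] EuclideanSpace ℝ (Fin n)).comp (J xn)) u‖ + ‖A.symm (f xn)‖ := by
        gcongr; exact norm_sub_le _ _
    _ ≤ ω * r ^ 2 / 2 + κ * r + α := by
        rw [hα]
        gcongr
    _ ≤ ω * R ^ 2 / 2 + κ * R + α := by
        have hsq : r ^ 2 ≤ R ^ 2 := pow_le_pow_left₀ hr0 hrR 2
        have h1 : ω * r ^ 2 ≤ ω * R ^ 2 := mul_le_mul_of_nonneg_left hsq hω.le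
        have h2 : κ * r ≤ κ * R := mul_le_mul_of_nonneg_left hrR hκ0
        linarith
    _ = R := hRquad
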